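/- Let C be an F-linear subspace of F^n and L ∈ P(K^n). Then dim_F Π_L(C) = Rk(L) − dim_F(C⊥ ∩ V_L), where Π_L : F^n → F^{Rk(L)} is the projection map associated to L and V_L is the sum-rank support space of L. -/

import Mathlib

open Module

/-! Setup for sum-rank metric codes and sum-matroids.

We fix `ℓ` finite fields `K i` with a common extension `F` (given by algebra
structures), and block lengths `nv i`.  The ambient space `F^n` (with
`n = ∑ i, nv i`) is modelled as the dependent product of the blocks `F^{nv i}`,
and an element of the product lattice `P(K^n)` is a tuple of `K i`-subspaces of
`K i ^ (nv i)`. -/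

/-- The ambient space `F^n`, split into `ℓ` blocks of sizes `nv i`. -/
abbrev SRAmb (ℓ : ℕ) (nv : Fin ℓ → ℕ) (F : Type) : Type :=
  (i : Fin ℓ) → Fin (nv i) → F

/-- The product lattice `P(K^n)`: tuples `L` where `L i` is a `K i`-subspace of
`K i ^ (nv i)`. -/
abbrev SRLat (ℓ : ℕ) (nv : Fin ℓ → ℕ) (K : Fin ℓ → Type) [∀ i, Field (K i)] : Type :=
  (i : Fin ℓ) → Submodule (K i) (Fin (nv i) → K i)

variable {ℓ : ℕ} {nv : Fin ℓ → ℕ} {F : Type} [Field F]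
  {K : Fin ℓ → Type} [∀ i, Field (K i)] [∀ i, Algebra (K i) F]

/-- `Rk(L) = ∑ i, dim_{K i} (L i)`. -/
noncomputable def SRrk (L : SRLat ℓ nv K) : ℕ := ∑ i, finrank (K i) (L i)

/-- Orthogonal complement of a subspace of `k^m` with respect to the standard
dot product. -/
def SRorth {k : Type} [Field k] {m : ℕ} (W : Submodule k (Fin m → k)) :
    Submodule k (Fin m → k) where
  carrier := {v | ∀ w ∈ W, ∑ t, v t * w t = 0}
  zero_mem' := by intro w hw; simp
  add_mem' := by
    intro a b ha hb w hw
    have h : ∑ t, (a + b) t * w t = (∑ t, a t * w t) + ∑ t, b t * w t := by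
      simp [add_mul, Finset.sum_add_distrib]
    rw [h, ha w hw, hb w hw, add_zero]
  smul_mem' := by
    intro c a ha w hw
    have h : ∑ t, (c • a) t * w t = c * ∑ t, a t * w t := by
      simp [Finset.mul_sum, mul_assoc]
    rw [h, ha w hw, mul_zero]

/-- Componentwise orthogonal complement `L^⊥` in the lattice `P(K^n)`. -/
def SRlatPerp (L : SRLat ℓ nv K) : SRLat ℓ nv K := fun i => SRorth (L i)

/-- The `i`-th component of the sum-rank support of `c ∈ F^n`: the `K i`-row
space of the coordinate matrix of the `i`-th block of `c` (described
basis-freely as the span of the images of the block of `c` under all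
`K i`-linear functionals `F → K i`). -/
def SRsupp (c : SRAmb ℓ nv F) (i : Fin ℓ) : Submodule (K i) (Fin (nv i) → K i) :=
  Submodule.span (K i) {v | ∃ f : F →ₗ[K i] K i, v = fun t => f (c i t)}

/-- The sum-rank weight `srank(c) = Rk(supp(c))`. -/
noncomputable def SRwt (c : SRAmb ℓ nv F) : ℕ :=
  ∑ i, finrank (K i) (SRsupp (K := K) c i)

/-- The sum-rank support space `V_L = {c ∈ F^n : supp(c) ⊆ L}`. -/
def SRVL (L : SRLat ℓ nv K) : Submodule F (SRAmb ℓ nv F) where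
  carrier := {c | ∀ i, SRsupp (K := K) c i ≤ L i}
  zero_mem' := by
    intro i
    apply Submodule.span_le.mpr
    rintro v ⟨f, rfl⟩
    have h : (fun t => f ((0 : SRAmb ℓ nv F) i t)) = (0 : Fin (nv i) → K i) := by
      funext t; simp
    rw [h]
    exact (L i).zero_mem
  add_mem' := by
    intro a b ha hb i
    apply Submodule.span_le.mpr
    rintro v ⟨f, rfl⟩
    have h : (fun t => f ((a + b) i t)) =
        (fun t => f (a i t)) + fun t => f (b i t) := by
      funext t; simp
    rw [h]
    exact (L i).add_mem (ha i (Submodule.subset_span ⟨f, rfl⟩))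
      (hb i (Submodule.subset_span ⟨f, rfl⟩))
  smul_mem' := by
    intro x a ha i
    apply Submodule.span_le.mpr
    rintro v ⟨f, rfl⟩
    have h : (fun t => f ((x • a) i t)) =
        fun t => (f.comp (LinearMap.mulLeft (K i) x)) (a i t) := by
      funext t; simp [smul_eq_mul]
    rw [h]
    exact ha i (Submodule.subset_span ⟨_, rfl⟩)

/-- The dual code `C^⊥` with respect to the standard bilinear form on `F^n`. -/
def SRdual (C : Submodule F (SRAmb ℓ nv F)) : Submodule F (SRAmb ℓ nv F) where
  carrier := {x | ∀ c ∈ C, ∑ i, ∑ t, x i t * c i t = 0}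
  zero_mem' := by intro c hc; simp
  add_mem' := by
    intro a b ha hb c hc
    have h : ∑ i, ∑ t, (a + b) i t * c i t =
        (∑ i, ∑ t, a i t * c i t) + ∑ i, ∑ t, b i t * c i t := by
      simp [add_mul, Finset.sum_add_distrib]
    rw [h, ha c hc, hb c hc, add_zero]
  smul_mem' := by
    intro x a ha c hc
    have h : ∑ i, ∑ t, (x • a) i t * c i t = x * ∑ i, ∑ t, a i t * c i t := by
      simp [Finset.mul_sum, mul_assoc]
    rw [h, ha c hc, mul_zero]

/-- `C(L) = {c ∈ C^⊥ : supp(c) ⊆ L^⊥} = C^⊥ ∩ V_{L^⊥}`. -/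
def SRCL (C : Submodule F (SRAmb ℓ nv F)) (L : SRLat ℓ nv K) :
    Submodule F (SRAmb ℓ nv F) :=
  SRdual C ⊓ SRVL (SRlatPerp L)

/-- The projection `Π_L : F^n → F^{Rk L}`, `x ↦ x Aᵀ`, where
`A = diag(A_1, …, A_ℓ)` and `A_i` is the matrix whose rows are the chosen basis
of `L i` over `K i`.  The target `F^{Rk L}` is indexed blockwise. -/
noncomputable def SRpi (L : SRLat ℓ nv K) :
    SRAmb ℓ nv F →ₗ[F] ((i : Fin ℓ) → Fin (finrank (K i) (L i)) → F) where
  toFun x := fun i j =>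
    ∑ t, x i t * algebraMap (K i) F ((Module.finBasis (K i) (L i) j).val t)
  map_add' x y := by
    funext i j
    simp [add_mul, Finset.sum_add_distrib]
  map_smul' a x := by
    funext i j
    simp [Finset.mul_sum, mul_assoc]

/-- The rank function `ρ_C(L) = dim_F Π_L(C^⊥)` of the sum-matroid associated
to the code `C`. -/
noncomputable def SRrho (C : Submodule F (SRAmb ℓ nv F)) (L : SRLat ℓ nv K) : ℕ :=
  finrank F (Submodule.map (SRpi (F := F) L) (SRdual C))

/-- Minimum sum-rank distance of a code. -/
noncomputable def SRminDist (K : Fin ℓ → Type) [∀ i, Field (K i)]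
    [∀ i, Algebra (K i) F] (C : Submodule F (SRAmb ℓ nv F)) : ℕ :=
  sInf {w | ∃ c ∈ C, c ≠ 0 ∧ SRwt (K := K) c = w}

/-- The `r`-th generalized sum-rank weight
`d_{SR,r}(C) = min{Rk L : dim_F (C ∩ V_L) ≥ r}`. -/
noncomputable def SRdgw (K : Fin ℓ → Type) [∀ i, Field (K i)]
    [∀ i, Algebra (K i) F] (C : Submodule F (SRAmb ℓ nv F)) (r : ℕ) : ℕ :=
  sInf {w | ∃ L : SRLat ℓ nv K, r ≤ finrank F ↥(C ⊓ SRVL L) ∧ SRrk L = w}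

/-- The sum-matroid axioms (R1), (R2), (R3) for a function `ρ : P(K^n) → ℕ`. -/
def IsSumMatroid (ρ : SRLat ℓ nv K → ℕ) : Prop :=
  (∀ L, ρ L ≤ SRrk L) ∧
  (∀ L L' : SRLat ℓ nv K, L ≤ L' → ρ L ≤ ρ L') ∧
  (∀ L L' : SRLat ℓ nv K, ρ (L ⊔ L') + ρ (L ⊓ L') ≤ ρ L + ρ L')

/-- The dual rank function `ρ*(L) = ρ(L^⊥) + Rk L − ρ(K^n)`. -/
noncomputable def SRdualRk (ρ : SRLat ℓ nv K → ℕ) (L : SRLat ℓ nv K) : ℕ :=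
  ρ (SRlatPerp L) + SRrk L - ρ ⊤

/-- The nullity function `η(L) = Rk L − ρ(L)`. -/
noncomputable def SReta (ρ : SRLat ℓ nv K → ℕ) (L : SRLat ℓ nv K) : ℕ :=
  SRrk L - ρ L

/-- The `i`-th generalized weight of a sum-matroid,
`d_i(M) = min{Rk L : η(L) = i}`. -/
noncomputable def SRgw (ρ : SRLat ℓ nv K → ℕ) (i : ℕ) : ℕ :=
  sInf {w | ∃ L : SRLat ℓ nv K, SReta ρ L = i ∧ SRrk L = w}



section Dot
variable {ι : Type} [Fintype ι] {κ : ι → Type} [∀ i, Fintype (κ i)] {F : Type} [Field F]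

/-- The standard dot-product pairing as a map to the dual. -/
noncomputable def dotDual : ((i : ι) → κ i → F) →ₗ[F] Module.Dual F ((i : ι) → κ i → F) where
  toFun v :=
    { toFun := fun w => ∑ i, ∑ j, v i j * w i j
      map_add' := by intro a b; simp [mul_add, Finset.sum_add_distrib]
      map_smul' := by intro c a; simp [Finset.mul_sum, mul_left_comm] }
  map_add' a b := by ext w; simp [add_mul, Finset.sum_add_distrib]
  map_smul' c a := by ext w; simp [Finset.mul_sum, mul_assoc]

lemma dotDual_apply (v w : (i : ι) → κ i → F) :
    dotDual v w = ∑ i, ∑ j, v i j * w i j := rfl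

lemma dotDual_injective : Function.Injective (dotDual (ι := ι) (κ := κ) (F := F)) := by
  classical
  rw [← LinearMap.ker_eq_bot, LinearMap.ker_eq_bot']
  intro v hv
  funext i j
  have h := congrArg (fun φ => φ (Pi.single i (Pi.single j (1 : F)))) hv
  simp only [dotDual_apply, LinearMap.zero_apply] at h
  rw [Finset.sum_eq_single i] at h
  · rw [Finset.sum_eq_single j] at h
    · simpa using h
    · intro j' _ hj'; simp [Pi.single_eq_same, Pi.single_eq_of_ne hj']
    · simp
  · intro i' _ hi'; simp [Pi.single_eq_of_ne hi']
  · simp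

/-- The orthogonal complement of `W` with respect to the dot product. -/
noncomputable def dotOrth (W : Submodule F ((i : ι) → κ i → F)) :
    Submodule F ((i : ι) → κ i → F) :=
  Submodule.comap dotDual W.dualAnnihilator

lemma mem_dotOrth {W : Submodule F ((i : ι) → κ i → F)} {v : (i : ι) → κ i → F} :
    v ∈ dotOrth W ↔ ∀ w ∈ W, ∑ i, ∑ j, v i j * w i j = 0 := by
  simp [dotOrth, Submodule.mem_dualAnnihilator, dotDual_apply]

lemma finrank_dotOrth (W : Submodule F ((i : ι) → κ i → F)) :
    finrank F (dotOrth W) + finrank F W = finrank F ((i : ι) → κ i → F) := by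
  classical
  have hinj := dotDual_injective (ι := ι) (κ := κ) (F := F)
  have hfr : finrank F ((i : ι) → κ i → F) = finrank F (Module.Dual F ((i : ι) → κ i → F)) :=
    (Subspace.dual_finrank_eq).symm
  let e : ((i : ι) → κ i → F) ≃ₗ[F] Module.Dual F ((i : ι) → κ i → F) :=
    LinearMap.linearEquivOfInjective dotDual hinj hfr
  have he : dotOrth W = Submodule.comap (↑e : _ →ₗ[F] _) W.dualAnnihilator := rfl
  rw [Submodule.comap_equiv_eq_map_symm] at he
  have h1 : finrank F (dotOrth W) = finrank F W.dualAnnihilator := by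
    rw [he]; exact (LinearEquiv.finrank_map_eq e.symm _)
  have h2 : finrank F W.dualAnnihilator = finrank F (((i : ι) → κ i → F) ⧸ W) :=
    (LinearEquiv.finrank_eq (Subspace.quotEquivAnnihilator W)).symm
  rw [h1, h2, Submodule.finrank_quotient_add_finrank]

end Dot


section Psi
variable {ℓ : ℕ} {nv : Fin ℓ → ℕ} {F : Type} [Field F]
  {K : Fin ℓ → Type} [∀ i, Field (K i)] [∀ i, Algebra (K i) F]

/-- The section map `ψ : F^{Rk L} → F^n`, `y ↦ y A`. -/
noncomputable def SRpsi (L : SRLat ℓ nv K) :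
    ((i : Fin ℓ) → Fin (finrank (K i) (L i)) → F) →ₗ[F] SRAmb ℓ nv F where
  toFun y := fun i t =>
    ∑ j, y i j * algebraMap (K i) F ((Module.finBasis (K i) (L i) j).val t)
  map_add' x y := by funext i t; simp [add_mul, Finset.sum_add_distrib]
  map_smul' a x := by funext i t; simp [Finset.mul_sum, mul_assoc]

lemma SRpsi_apply (L : SRLat ℓ nv K)
    (y : (i : Fin ℓ) → Fin (finrank (K i) (L i)) → F) (i : Fin ℓ) (t : Fin (nv i)) :
    SRpsi (F := F) L y i t =
      ∑ j, y i j * algebraMap (K i) F ((Module.finBasis (K i) (L i) j).val t) := rfl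

lemma SRpi_apply (L : SRLat ℓ nv K) (x : SRAmb ℓ nv F) (i : Fin ℓ)
    (j : Fin (finrank (K i) (L i))) :
    SRpi (F := F) L x i j =
      ∑ t, x i t * algebraMap (K i) F ((Module.finBasis (K i) (L i) j).val t) := rfl

lemma SRpsi_injective (L : SRLat ℓ nv K) :
    Function.Injective (SRpsi (F := F) (K := K) L) := by
  classical
  rw [← LinearMap.ker_eq_bot, LinearMap.ker_eq_bot']
  intro y hy
  funext i j
  set b : Fin (finrank (K i) (L i)) → (Fin (nv i) → K i) := fun j => (Module.finBasis (K i) (L i) j : _)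
    with hb
  -- the vectors `b j` are linearly independent over `K i`
  have hli : LinearIndependent (K i) b := by
    have := (Module.finBasis (K i) (L i)).linearIndependent
    exact this.map' (L i).subtype (Submodule.ker_subtype _)
  -- the total map and its left inverse
  let tot : (Fin (finrank (K i) (L i)) → K i) →ₗ[K i] (Fin (nv i) → K i) :=
    { toFun := fun a => ∑ j, a j • b j
      map_add' := by intro a b; simp [add_smul, Finset.sum_add_distrib]
      map_smul' := by intro c a; simp [smul_smul, Finset.smul_sum]
    }
  have htot : LinearMap.ker tot = ⊥ := by
    rw [LinearMap.ker_eq_bot']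
    intro a ha
    funext j'
    exact Fintype.linearIndependent_iff.mp hli a ha j'
  obtain ⟨g, hg⟩ := tot.exists_leftInverse_of_injective htot
  have hgb : ∀ j' : Fin (finrank (K i) (L i)), g (b j') = Pi.single j' 1 := by
    intro j'
    have h1 : tot (Pi.single j' 1) = b j' := by
      simp only [tot, LinearMap.coe_mk, AddHom.coe_mk]
      rw [Finset.sum_eq_single j' (fun j'' _ hj'' => by
        rw [Pi.single_eq_of_ne hj'', zero_smul]) (by simp)]
      rw [Pi.single_eq_same, one_smul]
    have h2 := LinearMap.congr_fun hg (Pi.single j' (1 : K i))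
    rw [LinearMap.comp_apply, h1, LinearMap.id_apply] at h2
    exact h2
  set M : Fin (finrank (K i) (L i)) → Fin (nv i) → K i := fun j t => g (Pi.single t 1) j with hM
  have hgx : ∀ (x : Fin (nv i) → K i) (j' : Fin (finrank (K i) (L i))), g x j' = ∑ t, x t * M j' t := by
    intro x j'
    have hx : x = ∑ t, x t • (Pi.single t (1 : K i) : Fin (nv i) → K i) := by
      funext t'
      rw [Finset.sum_apply, Finset.sum_eq_single t' (fun t _ ht => by
        rw [Pi.smul_apply, Pi.single_eq_of_ne (Ne.symm ht), smul_zero]) (by simp)]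
      simp
    conv_lhs => rw [hx]
    rw [map_sum, Finset.sum_apply]
    exact Finset.sum_congr rfl fun t _ => by simp [M, smul_eq_mul]
  have hdelta : ∀ j' : Fin (finrank (K i) (L i)), ∑ t, M j t * b j' t = (Pi.single j' (1 : K i) : Fin (finrank (K i) (L i)) → K i) j := by
    intro j'
    have h3 := congrArg (fun v => v j) (hgb j')
    change g (b j') j = (Pi.single j' (1 : K i) : Fin (finrank (K i) (L i)) → K i) j at h3
    rw [hgx (b j') j] at h3
    rw [← h3]
    exact Finset.sum_congr rfl fun t _ => mul_comm _ _
  have h0 : ∀ t, ∑ j', y i j' * algebraMap (K i) F (b j' t) = 0 := by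
    intro t
    have := congrFun (congrFun hy i) t
    simpa [SRpsi_apply] using this
  have hcalc : (0 : F) = y i j := by
    have e1 : (0 : F) = ∑ t, algebraMap (K i) F (M j t) *
        (∑ j', y i j' * algebraMap (K i) F (b j' t)) := by
      simp [h0]
    rw [e1]
    have e2 : ∀ t, algebraMap (K i) F (M j t) *
        (∑ j', y i j' * algebraMap (K i) F (b j' t))
        = ∑ j', y i j' * algebraMap (K i) F (M j t * b j' t) := by
      intro t
      rw [Finset.mul_sum]
      refine Finset.sum_congr rfl fun j' _ => ?_
      rw [map_mul]; ring
    simp_rw [e2]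
    rw [Finset.sum_comm]
    have e3 : ∀ j' : Fin (finrank (K i) (L i)), ∑ t, y i j' * algebraMap (K i) F (M j t * b j' t)
        = y i j' * algebraMap (K i) F ((Pi.single j' (1 : K i) : Fin (finrank (K i) (L i)) → K i) j) := by
      intro j'
      rw [← Finset.mul_sum, ← map_sum, hdelta j']
    simp_rw [e3]
    rw [Finset.sum_eq_single j (fun j' _ hj' => by
      rw [Pi.single_eq_of_ne (Ne.symm hj'), map_zero, mul_zero]) (by simp)]
    simp
  show y i j = 0
  exact hcalc.symm

lemma SRpsi_mem_SRVL (L : SRLat ℓ nv K)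
    (y : (i : Fin ℓ) → Fin (finrank (K i) (L i)) → F) :
    SRpsi (F := F) L y ∈ SRVL L := by
  intro i
  apply Submodule.span_le.mpr
  rintro v ⟨f, rfl⟩
  have hv : (fun t => f (SRpsi (F := F) L y i t)) =
      ∑ j, f (y i j) • ((Module.finBasis (K i) (L i) j : Fin (nv i) → K i)) := by
    funext t
    rw [SRpsi_apply, map_sum, Finset.sum_apply]
    refine Finset.sum_congr rfl fun j _ => ?_
    have h1 : y i j * algebraMap (K i) F ((Module.finBasis (K i) (L i) j).val t)
        = ((Module.finBasis (K i) (L i) j).val t) • y i j := by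
      rw [Algebra.smul_def, mul_comm]
    rw [h1, map_smul]
    simp [smul_eq_mul, mul_comm]
  rw [hv]
  exact Submodule.sum_mem _ fun j _ =>
    Submodule.smul_mem _ _ (Module.finBasis (K i) (L i) j).2

lemma SRVL_le_range_SRpsi [∀ i, FiniteDimensional (K i) F] (L : SRLat ℓ nv K)
    (c : SRAmb ℓ nv F) (hc : c ∈ SRVL L) :
    ∃ y, SRpsi (F := F) L y = c := by
  classical
  have hv : ∀ (i : Fin ℓ) (s : Fin (finrank (K i) F)),
      (fun t => (Module.finBasis (K i) F).repr (c i t) s) ∈ L i := by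
    intro i s
    refine hc i (Submodule.subset_span ⟨(Module.finBasis (K i) F).coord s, ?_⟩)
    funext t; simp [Basis.coord_apply]
  refine ⟨fun i j => ∑ s, (Module.finBasis (K i) F) s *
    algebraMap (K i) F ((Module.finBasis (K i) (L i)).repr ⟨_, hv i s⟩ j), ?_⟩
  funext i t
  rw [SRpsi_apply]
  have e1 : ∀ j : Fin (finrank (K i) (L i)),
      (∑ s, (Module.finBasis (K i) F) s *
        algebraMap (K i) F ((Module.finBasis (K i) (L i)).repr ⟨_, hv i s⟩ j)) *
        algebraMap (K i) F ((Module.finBasis (K i) (L i) j).val t)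
      = ∑ s, (Module.finBasis (K i) F) s *
        algebraMap (K i) F ((Module.finBasis (K i) (L i)).repr ⟨_, hv i s⟩ j *
          (Module.finBasis (K i) (L i) j).val t) := by
    intro j
    rw [Finset.sum_mul]
    refine Finset.sum_congr rfl fun s _ => ?_
    rw [map_mul]; ring
  simp_rw [e1]
  rw [Finset.sum_comm]
  have e2 : ∀ s : Fin (finrank (K i) F),
      ∑ j, (Module.finBasis (K i) F) s *
        algebraMap (K i) F ((Module.finBasis (K i) (L i)).repr ⟨_, hv i s⟩ j *
          (Module.finBasis (K i) (L i) j).val t)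
      = (Module.finBasis (K i) F) s *
        algebraMap (K i) F ((Module.finBasis (K i) F).repr (c i t) s) := by
    intro s
    have h3 := (Module.finBasis (K i) (L i)).sum_repr ⟨_, hv i s⟩
    have h4 := congrFun (congrArg (Subtype.val) h3) t
    have h5 : ∑ j, ((Module.finBasis (K i) (L i)).repr ⟨_, hv i s⟩ j) *
        (Module.finBasis (K i) (L i) j).val t
        = (Module.finBasis (K i) F).repr (c i t) s := by
      refine Eq.trans ?_ h4
      simp only [Submodule.coe_sum, Finset.sum_apply, Submodule.coe_smul, Pi.smul_apply, smul_eq_mul]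
    rw [← Finset.mul_sum]
    congr 1
    rw [← h5, map_sum]
  simp_rw [e2]
  conv_rhs => rw [← (Module.finBasis (K i) F).sum_repr (c i t)]
  refine Finset.sum_congr rfl fun s _ => ?_
  rw [Algebra.smul_def, mul_comm]

lemma SR_adj (L : SRLat ℓ nv K) (x : SRAmb ℓ nv F)
    (y : (i : Fin ℓ) → Fin (finrank (K i) (L i)) → F) :
    ∑ i, ∑ t, x i t * SRpsi (F := F) L y i t =
    ∑ i, ∑ j, y i j * SRpi (F := F) L x i j := by
  refine Finset.sum_congr rfl fun i _ => ?_
  simp_rw [SRpsi_apply, SRpi_apply, Finset.mul_sum]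
  rw [Finset.sum_comm]
  exact Finset.sum_congr rfl fun j _ => Finset.sum_congr rfl fun t _ => by ring

end Psi

/-- `dim_F Π_L(C) = Rk(L) − dim_F (C^⊥ ∩ V_L)`. -/
theorem stmt7_dim_piL
    {ℓ : ℕ} (hℓ : 0 < ℓ) {nv : Fin ℓ → ℕ} (hnv : ∀ i, 0 < nv i)
    {F : Type} [Field F] [Finite F]
    {K : Fin ℓ → Type} [∀ i, Field (K i)] [∀ i, Finite (K i)]
    [∀ i, Algebra (K i) F] [∀ i, FiniteDimensional (K i) F]
    (C : Submodule F (SRAmb ℓ nv F)) (L : SRLat ℓ nv K) :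
    Module.finrank F ↥(Submodule.map (SRpi (F := F) L) C) =
      SRrk L - Module.finrank F ↥(SRdual C ⊓ SRVL L) := by
    classical
  set W := Submodule.map (SRpi (F := F) L) C with hW
  have hset : Submodule.map (SRpsi (F := F) (K := K) L) (dotOrth W) = SRdual C ⊓ SRVL L := by
    apply le_antisymm
    · rintro x hx
      rw [Submodule.mem_map] at hx
      obtain ⟨y, hy, rfl⟩ := hx
      rw [mem_dotOrth] at hy
      refine ⟨?_, SRpsi_mem_SRVL L y⟩
      intro c hc
      have h1 := hy (SRpi (F := F) L c) ⟨c, hc, rfl⟩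
      have h2 := SR_adj (F := F) L c y
      show ∑ i, ∑ t, SRpsi (F := F) L y i t * c i t = 0
      calc ∑ i, ∑ t, SRpsi (F := F) L y i t * c i t
          = ∑ i, ∑ t, c i t * SRpsi (F := F) L y i t :=
            Finset.sum_congr rfl fun i _ => Finset.sum_congr rfl fun t _ => mul_comm _ _
        _ = ∑ i, ∑ j, y i j * SRpi (F := F) L c i j := h2
        _ = 0 := h1
    · rintro x ⟨hx1, hx2⟩
      obtain ⟨y, rfl⟩ := SRVL_le_range_SRpsi L x hx2
      refine Submodule.mem_map.mpr ⟨y, ?_, rfl⟩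
      rw [mem_dotOrth]
      rintro w ⟨c, hc, rfl⟩
      have h2 := SR_adj (F := F) L c y
      have h1 : ∑ i, ∑ t, SRpsi (F := F) L y i t * c i t = 0 := hx1 c hc
      rw [← h2, ← h1]
      exact Finset.sum_congr rfl fun i _ => Finset.sum_congr rfl fun t _ => mul_comm _ _
  have hinj := SRpsi_injective (F := F) L
  have hfr1 : finrank F ↥(SRdual C ⊓ SRVL L) = finrank F ↥(dotOrth W) := by
    rw [← hset]
    exact (LinearEquiv.finrank_eq (Submodule.equivMapOfInjective _ hinj (dotOrth W))).symm
  have hfr2 := finrank_dotOrth W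
  have hT : finrank F ((i : Fin ℓ) → Fin (finrank (K i) (L i)) → F) = SRrk L := by
    rw [Module.finrank_pi_fintype]
    unfold SRrk
    exact Finset.sum_congr rfl fun i _ => by simp [Module.finrank_pi]
  rw [hT] at hfr2
  rw [hfr1]
  omega
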